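/- Consider the 'intersection line gadget': the graph K_{3,4} with parts {v₁,v₂,v₃} and {u₁,u₂,u₃,u₄}, together with the path edges v₁v₂ and v₂v₃. If this graph has a crossing-free straight-line drawing in ℝ³ whose vertices and edges are contained in the union of two distinct non-parallel planes, then v₁, v₂, v₃ all lie on the intersection line of the two planes and none of u₁,…,u₄ lies on that line. -/

import Mathlib

/-- `P` is a plane in `ℝ³`. -/
def IsPlane (P : Set (Fin 3 → ℝ)) : Prop :=
  ∃ p u v : Fin 3 → ℝ, LinearIndependent ℝ ![u, v] ∧
    P = {x | ∃ s t : ℝ, x = p + s • u + t • v}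

/-- A `k`-plane cover of a graph `G` in `ℝ³`: a crossing-free straight-line drawing of
`G` contained in the union of `k` planes. -/
structure PlaneCover {V : Type*} (G : SimpleGraph V) (k : ℕ) where
  pos : V → (Fin 3 → ℝ)
  inj : Function.Injective pos
  planes : Fin k → Set (Fin 3 → ℝ)
  isPlane : ∀ i, IsPlane (planes i)
  coversV : ∀ v, pos v ∈ ⋃ i, planes i
  coversE : ∀ ⦃u v⦄, G.Adj u v → segment ℝ (pos u) (pos v) ⊆ ⋃ i, planes i
  noCross : ∀ ⦃u v a b⦄, G.Adj u v → G.Adj a b → ({u, v} : Set V) ≠ {a, b} →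
    ∀ x ∈ segment ℝ (pos u) (pos v) ∩ segment ℝ (pos a) (pos b),
      ∃ w, (w = u ∨ w = v) ∧ (w = a ∨ w = b) ∧ x = pos w

/-- The plane cover number `ρ²_3(G)`: the minimum number of planes in `ℝ³` whose union
contains a crossing-free straight-line drawing of `G`. -/
noncomputable def rho23 {V : Type*} (G : SimpleGraph V) : ℕ :=
  sInf {k | Nonempty (PlaneCover G k)}

/-- The intersection line gadget: `K_{3,4}` with parts `{v₁,v₂,v₃}` and
`{u₁,u₂,u₃,u₄}`, together with the path edges `v₁v₂` and `v₂v₃`. -/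
def gadget : SimpleGraph (Fin 3 ⊕ Fin 4) :=
  completeBipartiteGraph (Fin 3) (Fin 4) ⊔
    SimpleGraph.fromEdgeSet
      {s(Sum.inl 0, Sum.inl 1), s(Sum.inl 1, Sum.inl 2)}



namespace Gdg
abbrev Pt := ℝ × ℝ

def od (p q r : Pt) : ℝ := (q.1-p.1)*(r.2-p.2)-(q.2-p.2)*(r.1-p.1)

lemma mem_seg {x y z : Pt} : z ∈ segment ℝ x y ↔ ∃ a b : ℝ, 0 ≤ a ∧ 0 ≤ b ∧ a + b = 1 ∧ a • x + b • y = z := Iff.rfl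

lemma od_cyc (p q r : Pt) : od p q r = od q r p := by simp only [od]; ring
lemma od_swap (p q r : Pt) : od p q r = - od p r q := by simp only [od]; ring
lemma od_sum (p q r x : Pt) : od x q r + od p x r + od p q x = od p q r := by
  simp only [od]; ring
lemma od_self₁ (p q : Pt) : od p q p = 0 := by simp only [od]; ring
lemma od_self₂ (p q : Pt) : od p q q = 0 := by simp only [od]; ring
lemma od_self₀ (p x : Pt) : od p p x = 0 := by simp only [od]; ring

lemma smul_fst (c : ℝ) (p : Pt) : (c • p).1 = c * p.1 := rfl
lemma smul_snd (c : ℝ) (p : Pt) : (c • p).2 = c * p.2 := rfl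

lemma od_comb1 {a b : ℝ} (h : a + b = 1) (x y q r : Pt) :
    od (a • x + b • y) q r = a * od x q r + b * od y q r := by
  have hb : b = 1 - a := by linarith
  subst hb
  simp only [od, Prod.fst_add, Prod.snd_add, smul_fst, smul_snd]; ring

lemma od_comb3 {a b : ℝ} (h : a + b = 1) (x y q r : Pt) :
    od q r (a • x + b • y) = a * od q r x + b * od q r y := by
  rw [od_cyc q r _, od_cyc r _ q, od_comb1 h]
  rw [od_cyc q r x, od_cyc r x q, od_cyc q r y, od_cyc r y q]

lemma od_comb2 {a b : ℝ} (h : a + b = 1) (x y q r : Pt) :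
    od q (a • x + b • y) r = a * od q x r + b * od q y r := by
  rw [od_swap q _ r, od_comb3 h, od_swap q r x, od_swap q r y]; ring

lemma cramer (p q r x : Pt) :
    od p q r • x = od x q r • p + od p x r • q + od p q x • r := by
  apply Prod.ext <;>
    simp only [od, Prod.fst_add, Prod.snd_add, smul_fst, smul_snd] <;> ring

lemma col_decomp {p q x : Pt} (h : od p q x = 0) (hpq : q ≠ p) :
    ∃ t : ℝ, x = (1 - t) • p + t • q := by
  have h1 : (q - p).1 ≠ 0 ∨ (q - p).2 ≠ 0 := by
    by_contra hc
    push_neg at hc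
    obtain ⟨h1, h2⟩ := hc
    rw [Prod.fst_sub, sub_eq_zero] at h1
    rw [Prod.snd_sub, sub_eq_zero] at h2
    exact hpq (Prod.ext h1 h2)
  rcases h1 with h1 | h1
  · refine ⟨(x - p).1 / (q - p).1, ?_⟩
    simp only [od, Prod.fst_sub, Prod.snd_sub] at h h1
    apply Prod.ext <;>
      simp only [Prod.fst_add, Prod.snd_add, smul_fst, smul_snd, Prod.fst_sub, Prod.snd_sub] <;>
      field_simp <;> nlinarith [h]
  · refine ⟨(x - p).2 / (q - p).2, ?_⟩
    simp only [od, Prod.fst_sub, Prod.snd_sub] at h h1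
    apply Prod.ext <;>
      simp only [Prod.fst_add, Prod.snd_add, smul_fst, smul_snd, Prod.fst_sub, Prod.snd_sub] <;>
      field_simp <;> nlinarith [h]

/-- strict interior of a triangle, as strict convex combination -/
def InTri (x p q r : Pt) : Prop :=
  ∃ α β γ : ℝ, 0 < α ∧ 0 < β ∧ 0 < γ ∧ α + β + γ = 1 ∧ α • p + β • q + γ • r = x

def InCl (x p q r : Pt) : Prop :=
  ∃ α β γ : ℝ, 0 ≤ α ∧ 0 ≤ β ∧ 0 ≤ γ ∧ α + β + γ = 1 ∧ α • p + β • q + γ • r = x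

lemma InTri.swap23 {x p q r : Pt} (h : InTri x p q r) : InTri x p r q := by
  obtain ⟨a, b, c, ha, hb, hc, hs, he⟩ := h
  exact ⟨a, c, b, ha, hc, hb, by linarith, by rw [← he]; module⟩

lemma InTri.swap12 {x p q r : Pt} (h : InTri x p q r) : InTri x q p r := by
  obtain ⟨a, b, c, ha, hb, hc, hs, he⟩ := h
  exact ⟨b, a, c, hb, ha, hc, by linarith, by rw [← he]; module⟩

lemma InCl.swap23 {x p q r : Pt} (h : InCl x p q r) : InCl x p r q := by
  obtain ⟨a, b, c, ha, hb, hc, hs, he⟩ := h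
  exact ⟨a, c, b, ha, hc, hb, by linarith, by rw [← he]; module⟩

lemma InTri.incl {x p q r : Pt} (h : InTri x p q r) : InCl x p q r := by
  obtain ⟨a, b, c, ha, hb, hc, hs, he⟩ := h
  exact ⟨a, b, c, ha.le, hb.le, hc.le, hs, he⟩

/-- coefficients of a combination are determined by orientation ratios -/
lemma od_comb_fst {α β γ : ℝ} (hs : α + β + γ = 1) (p q r : Pt) :
    od (α • p + β • q + γ • r) q r = α * od p q r := by
  have h3 : γ = 1 - α - β := by linarith
  subst h3
  simp only [od, Prod.fst_add, Prod.snd_add, smul_fst, smul_snd]; ring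

lemma od_comb_snd {α β γ : ℝ} (hs : α + β + γ = 1) (p q r : Pt) :
    od p (α • p + β • q + γ • r) r = β * od p q r := by
  have h3 : γ = 1 - α - β := by linarith
  subst h3
  simp only [od, Prod.fst_add, Prod.snd_add, smul_fst, smul_snd]; ring

lemma od_comb_trd {α β γ : ℝ} (hs : α + β + γ = 1) (p q r : Pt) :
    od p q (α • p + β • q + γ • r) = γ * od p q r := by
  have h3 : γ = 1 - α - β := by linarith
  subst h3
  simp only [od, Prod.fst_add, Prod.snd_add, smul_fst, smul_snd]; ring

lemma seg_of_comb {S X Y : ℝ} {x p q : Pt} (hS : X + Y = S) (hX : 0 ≤ X) (hY : 0 ≤ Y)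
    (hS0 : 0 < S) (h : S • x = X • p + Y • q) : x ∈ segment ℝ p q := by
  refine ⟨X / S, Y / S, by positivity, by positivity, by field_simp; linarith, ?_⟩
  have : (S⁻¹ * S) • x = S⁻¹ • (X • p + Y • q) := by
    rw [← smul_smul, h]
  rw [inv_mul_cancel₀ hS0.ne'] at this
  rw [div_eq_inv_mul, div_eq_inv_mul, one_smul] at *
  rw [mul_smul, mul_smul, ← smul_add]
  exact this.symm

lemma tri_of_comb {S A B C : ℝ} {x p q r : Pt} (hS : A + B + C = S) (hA : 0 < A) (hB : 0 < B)
    (hC : 0 < C) (h : S • x = A • p + B • q + C • r) : InTri x p q r := by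
  have hS0 : 0 < S := by linarith
  refine ⟨A / S, B / S, C / S, by positivity, by positivity, by positivity,
    by field_simp; linarith, ?_⟩
  have : (S⁻¹ * S) • x = S⁻¹ • (A • p + B • q + C • r) := by
    rw [← smul_smul, h]
  rw [inv_mul_cancel₀ hS0.ne', one_smul] at this
  rw [div_eq_inv_mul, div_eq_inv_mul, div_eq_inv_mul, mul_smul, mul_smul, mul_smul,
    ← smul_add, ← smul_add]
  exact this.symm

lemma comb_mem_seg {a b : ℝ} {x y : Pt} (ha : 0 ≤ a) (hb : 0 ≤ b) (hab : a + b = 1) :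
    a • x + b • y ∈ segment ℝ x y := ⟨a, b, ha, hb, hab, rfl⟩

/-- two segments whose endpoints strictly straddle each other's lines intersect -/
lemma seg_inter {a b c d : Pt} (h1 : od a b c * od a b d < 0)
    (h2 : od c d a * od c d b < 0) :
    ∃ x, x ∈ segment ℝ a b ∧ x ∈ segment ℝ c d := by
  have hden : od c d a - od c d b ≠ 0 := by
    intro h; rw [sub_eq_zero] at h; rw [h] at h2; nlinarith [sq_nonneg (od c d b)]
  set t : ℝ := od c d a / (od c d a - od c d b) with ht
  have h0t : 0 < t ∧ t < 1 := by
    rcases mul_neg_iff.mp h2 with ⟨hp, hn⟩ | ⟨hn, hp⟩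
    · constructor
      · apply div_pos hp (by linarith)
      · rw [div_lt_one (by linarith)]; linarith
    · have hd : od c d a - od c d b < 0 := by linarith
      constructor
      · exact div_pos_of_neg_of_neg hn hd
      · rw [div_lt_one_of_neg hd]; linarith
  set x : Pt := (1 - t) • a + t • b with hx
  have hxa : x ∈ segment ℝ a b := comb_mem_seg (by linarith [h0t.1, h0t.2]) h0t.1.le (by ring)
  have hcd : od c d x = 0 := by
    rw [hx, od_comb3 (by ring : (1-t) + t = 1), ht]
    field_simp
    ring
  have hdc : d ≠ c := by
    intro h; subst h; rw [od_self₀] at h2; nlinarith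
  obtain ⟨s, hs⟩ := col_decomp hcd hdc
  have habx : od a b x = 0 := by
    rw [hx, od_comb3 (by ring : (1-t) + t = 1), od_self₁, od_self₂]; ring
  have habs : (1 - s) * od a b c + s * od a b d = 0 := by
    rw [hs, od_comb3 (by ring : (1-s) + s = 1)] at habx; linarith
  have h0s : 0 ≤ 1 - s ∧ 0 ≤ s := by
    constructor <;> by_contra hc <;> push_neg at hc <;>
      rcases mul_neg_iff.mp h1 with ⟨hp, hn⟩ | ⟨hn, hp⟩ <;> nlinarith
  exact ⟨x, hxa, by rw [hs]; exact comb_mem_seg h0s.1 h0s.2 (by ring)⟩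

/-- root helper for the separation lemma -/
lemma root_prop (A B : ℝ) (hA : 0 < A) :
    ∃ τ : ℝ, 0 < τ ∧ τ ≤ 1 ∧ (∀ t, 0 ≤ t → t ≤ τ → 0 ≤ (1-t)*A + t*B) ∧
      (B < 0 → (1-τ)*A + τ*B = 0 ∧ τ < 1) ∧ (0 ≤ B → τ = 1) := by
  by_cases hB : B < 0
  · have hAB : 0 < A - B := by linarith
    refine ⟨A / (A - B), by positivity, ?_, ?_, fun _ => ⟨?_, ?_⟩, fun h => absurd h (by linarith)⟩
    · rw [div_le_one hAB]; linarith
    · intro t h0 h1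
      rw [le_div_iff₀ hAB] at h1
      nlinarith
    · field_simp
      ring
    · rw [div_lt_one hAB]; linarith
  · push_neg at hB
    exact ⟨1, one_pos, le_refl 1, fun t h0 h1 => by nlinarith,
      fun h => absurd h (by linarith), fun _ => rfl⟩

lemma incl_of_nonneg {y p q r : Pt} (hD : 0 < od p q r) (h1 : 0 ≤ od y q r)
    (h2 : 0 ≤ od p y r) (h3 : 0 ≤ od p q y) : InCl y p q r := by
  refine ⟨od y q r / od p q r, od p y r / od p q r, od p q y / od p q r,
    by positivity, by positivity, by positivity, ?_, ?_⟩
  · field_simp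
    linarith [od_sum p q r y]
  · have hc := cramer p q r y
    have : (od p q r)⁻¹ • (od p q r • y) = (od p q r)⁻¹ • (od y q r • p + od p y r • q + od p q y • r) := by rw [hc]
    rw [smul_smul, inv_mul_cancel₀ hD.ne', one_smul] at this
    rw [div_eq_inv_mul, div_eq_inv_mul, div_eq_inv_mul, mul_smul, mul_smul, mul_smul,
      ← smul_add, ← smul_add]
    exact this.symm

lemma intri_ods {x p q r : Pt} (hD : 0 < od p q r) (h : InTri x p q r) :
    0 < od x q r ∧ 0 < od p x r ∧ 0 < od p q x := by
  obtain ⟨a, b, c, ha, hb, hc, hs, he⟩ := h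
  refine ⟨?_, ?_, ?_⟩
  · rw [← he, od_comb_fst hs]; positivity
  · rw [← he, od_comb_snd hs]; positivity
  · rw [← he, od_comb_trd hs]; positivity

/-- separation: a segment from the open triangle to a point outside the closed
triangle must meet one of the three sides. -/
lemma separation {x y p q r : Pt} (hD : 0 < od p q r) (hx : InTri x p q r)
    (hy : ¬ InCl y p q r) :
    ∃ z, z ∈ segment ℝ x y ∧
      (z ∈ segment ℝ p q ∨ z ∈ segment ℝ q r ∨ z ∈ segment ℝ p r) := by
  obtain ⟨hA0, hA1, hA2⟩ := intri_ods hD hx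
  set A0 := od x q r; set A1 := od p x r; set A2 := od p q x
  set B0 := od y q r; set B1 := od p y r; set B2 := od p q y
  have hneg : B0 < 0 ∨ B1 < 0 ∨ B2 < 0 := by
    by_contra hc
    push_neg at hc
    exact hy (incl_of_nonneg hD hc.1 hc.2.1 hc.2.2)
  obtain ⟨τ0, hτ0p, hτ0le, hmon0, hroot0, hone0⟩ := root_prop A0 B0 hA0
  obtain ⟨τ1, hτ1p, hτ1le, hmon1, hroot1, hone1⟩ := root_prop A1 B1 hA1
  obtain ⟨τ2, hτ2p, hτ2le, hmon2, hroot2, hone2⟩ := root_prop A2 B2 hA2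
  set τ := min τ0 (min τ1 τ2) with hτ
  have hτp : 0 < τ := lt_min hτ0p (lt_min hτ1p hτ2p)
  have hτ1 : τ ≤ 1 := le_trans (min_le_left _ _) hτ0le
  set z : Pt := (1 - τ) • x + τ • y with hz
  have hzv0 : od z q r = (1-τ)*A0 + τ*B0 := od_comb1 (by ring) x y q r
  have hzv1 : od p z r = (1-τ)*A1 + τ*B1 := od_comb2 (by ring) x y p r
  have hzv2 : od p q z = (1-τ)*A2 + τ*B2 := od_comb3 (by ring) x y p q
  have hge0 : 0 ≤ od z q r := by
    rw [hzv0]; exact hmon0 τ hτp.le (min_le_left _ _)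
  have hge1 : 0 ≤ od p z r := by
    rw [hzv1]; exact hmon1 τ hτp.le (le_trans (min_le_right _ _) (min_le_left _ _))
  have hge2 : 0 ≤ od p q z := by
    rw [hzv2]; exact hmon2 τ hτp.le (le_trans (min_le_right _ _) (min_le_right _ _))
  have hsum : od z q r + od p z r + od p q z = od p q r := od_sum p q r z
  have hzer : od z q r = 0 ∨ od p z r = 0 ∨ od p q z = 0 := by
    have hτlt1 : τ < 1 := by
      rcases hneg with h | h | h
      · exact lt_of_le_of_lt (min_le_left _ _) (hroot0 h).2
      · exact lt_of_le_of_lt (le_trans (min_le_right _ _) (min_le_left _ _)) (hroot1 h).2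
      · exact lt_of_le_of_lt (le_trans (min_le_right _ _) (min_le_right _ _)) (hroot2 h).2
    rcases le_total τ0 (min τ1 τ2) with hm | hm
    · have hτeq : τ = τ0 := min_eq_left hm
      left
      have hB0 : B0 < 0 := by
        by_contra hc
        push_neg at hc
        rw [hτeq, hone0 hc] at hτlt1; linarith
      rw [hzv0, hτeq]; exact (hroot0 hB0).1
    · rcases le_total τ1 τ2 with hm2 | hm2
      · have hτeq : τ = τ1 := by rw [hτ, min_eq_right hm, min_eq_left hm2]
        right; left
        have hB1 : B1 < 0 := by
          by_contra hc
          push_neg at hc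
          rw [hτeq, hone1 hc] at hτlt1; linarith
        rw [hzv1, hτeq]; exact (hroot1 hB1).1
      · have hτeq : τ = τ2 := by rw [hτ, min_eq_right hm, min_eq_right hm2]
        right; right
        have hB2 : B2 < 0 := by
          by_contra hc
          push_neg at hc
          rw [hτeq, hone2 hc] at hτlt1; linarith
        rw [hzv2, hτeq]; exact (hroot2 hB2).1
  refine ⟨z, comb_mem_seg (by linarith) hτp.le (by ring), ?_⟩
  have hcz := cramer p q r z
  rcases hzer with h0 | h0 | h0
  · have hcomb : od p q r • z = od p z r • q + od p q z • r := by
      rw [hcz, h0, zero_smul, zero_add]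
    exact Or.inr (Or.inl (seg_of_comb (by linarith) hge1 hge2 hD hcomb))
  · have hcomb : od p q r • z = od z q r • p + od p q z • r := by
      rw [hcz, h0, zero_smul, add_zero]
    exact Or.inr (Or.inr (seg_of_comb (by linarith) hge0 hge2 hD hcomb))
  · have hcomb : od p q r • z = od z q r • p + od p z r • q := by
      rw [hcz, h0, zero_smul, add_zero]
    exact Or.inl (seg_of_comb (by linarith) hge0 hge1 hD hcomb)

/-- two triangles on the same base, apexes strictly on the same side, with
non-crossing legs: one apex is inside the other's triangle -/
lemma nesting {p q a b : Pt} (hab : a ≠ b) (hDa : 0 < od p q a) (hDb : 0 < od p q b)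
    (d1 : ∀ x, x ∈ segment ℝ a p → x ∈ segment ℝ b q → False)
    (d2 : ∀ x, x ∈ segment ℝ a q → x ∈ segment ℝ b p → False) :
    InTri b p q a ∨ InTri a p q b := by
  have haq : a ≠ q := by
    intro h; rw [h, od_self₂] at hDa; linarith
  have hap : p ≠ a := by
    intro h; rw [← h, od_self₁] at hDa; linarith
  rcases lt_trichotomy (od q a b) 0 with hx1 | hx1 | hx1
  · rcases lt_trichotomy (od a p b) 0 with hx2 | hx2 | hx2
    · -- both negative: a inside triangle (p,q,b)
      right
      refine tri_of_comb (S := od p q b) ?_ ?_ ?_ hDa (cramer p q b a)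
      · linarith [od_sum p q b a]
      · have : od a q b = - od q a b := by simp only [od]; ring
        rw [this]; linarith
      · have : od p a b = - od a p b := by simp only [od]; ring
        rw [this]; linarith
    · -- od a p b = 0 : b on line a p
      exfalso
      obtain ⟨t, hb⟩ := col_decomp hx2 hap
      have hodb : od p q b = (1-t) * od p q a := by
        rw [hb, od_comb3 (by ring : (1-t) + t = 1), od_self₁]; ring
      have ht1 : t < 1 := by nlinarith
      rcases lt_trichotomy t 0 with ht | ht | ht
      · -- a ∈ segment b p
        have hmem : a ∈ segment ℝ b p := by
          refine seg_of_comb (S := 1 - t) (X := 1) (Y := -t) (by ring) zero_le_one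
            (by linarith) (by linarith) ?_
          rw [hb]; module
        exact d2 a (left_mem_segment ℝ a q) hmem
      · apply hab
        rw [hb, ht]; module
      · have hmem : b ∈ segment ℝ a p := ⟨1 - t, t, by linarith, ht.le, by ring, hb.symm⟩
        exact d1 b hmem (left_mem_segment ℝ b q)
    · -- x1 < 0, x2 > 0 : [b,p] crosses [a,q]
      exfalso
      have e1 : od b p a = - od a p b := by simp only [od]; ring
      have e2 : od b p q = od p q b := by simp only [od]; ring
      have e3 : od a q b = - od q a b := by simp only [od]; ring
      have e4 : od a q p = - od p q a := by simp only [od]; ring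
      obtain ⟨x, hx, hx'⟩ := seg_inter (a := b) (b := p) (c := a) (d := q)
        (by rw [e1, e2]; nlinarith) (by rw [e3, e4]; nlinarith)
      exact d2 x hx' hx
  · -- od q a b = 0 : b on line q a
    exfalso
    obtain ⟨t, hb⟩ := col_decomp hx1 haq
    have hodb : od p q b = t * od p q a := by
      rw [hb, od_comb3 (by ring : (1-t) + t = 1), od_self₂]; ring
    have ht0 : 0 < t := by nlinarith
    rcases lt_trichotomy t 1 with ht | ht | ht
    · have hmem : b ∈ segment ℝ a q := by
        rw [segment_symm]
        exact (hb ▸ comb_mem_seg (by linarith) ht0.le (by ring))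
      exact d2 b hmem (left_mem_segment ℝ b p)
    · apply hab
      rw [hb, ht]; module
    · have hmem : a ∈ segment ℝ b q := by
        refine seg_of_comb (S := t) (X := 1) (Y := t - 1) (by ring) zero_le_one
          (by linarith) (by linarith) ?_
        rw [hb]; module
      exact d1 a (left_mem_segment ℝ a p) hmem
  · rcases lt_trichotomy (od a p b) 0 with hx2 | hx2 | hx2
    · -- x1 > 0, x2 < 0 : [a,p] crosses [b,q]
      exfalso
      have e1 : od a p q = od p q a := by simp only [od]; ring
      have e2 : od b q a = od q a b := by simp only [od]; ring
      have e3 : od b q p = - od p q b := by simp only [od]; ring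
      obtain ⟨x, hx, hx'⟩ := seg_inter (a := a) (b := p) (c := b) (d := q)
        (by rw [e1]; nlinarith) (by rw [e2, e3]; nlinarith)
      exact d1 x hx hx'
    · -- od a p b = 0 again
      exfalso
      obtain ⟨t, hb⟩ := col_decomp hx2 hap
      have hodb : od p q b = (1-t) * od p q a := by
        rw [hb, od_comb3 (by ring : (1-t) + t = 1), od_self₁]; ring
      have ht1 : t < 1 := by nlinarith
      rcases lt_trichotomy t 0 with ht | ht | ht
      · have hmem : a ∈ segment ℝ b p := by
          refine seg_of_comb (S := 1 - t) (X := 1) (Y := -t) (by ring) zero_le_one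
            (by linarith) (by linarith) ?_
          rw [hb]; module
        exact d2 a (left_mem_segment ℝ a q) hmem
      · apply hab
        rw [hb, ht]; module
      · have hmem : b ∈ segment ℝ a p := ⟨1 - t, t, by linarith, ht.le, by ring, hb.symm⟩
        exact d1 b hmem (left_mem_segment ℝ b q)
    · -- both positive: b inside triangle (p,q,a)
      left
      refine tri_of_comb (S := od p q a) ?_ ?_ ?_ hDb (cramer p q a b)
      · linarith [od_sum p q a b]
      · have : od b q a = od q a b := by simp only [od]; ring
        rw [this]; linarith
      · have : od p b a = od a p b := by simp only [od]; ring
        rw [this]; linarith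

lemma separation' {x y p q r : Pt} (hD : od p q r ≠ 0) (hx : InTri x p q r)
    (hy : ¬ InCl y p q r) :
    ∃ z, z ∈ segment ℝ x y ∧
      (z ∈ segment ℝ p q ∨ z ∈ segment ℝ q r ∨ z ∈ segment ℝ p r) := by
  rcases hD.lt_or_gt with h | h
  · have h' : 0 < od p r q := by have := od_swap p q r; linarith
    obtain ⟨z, hz, hseg⟩ := separation h' hx.swap23 (fun hc => hy hc.swap23)
    refine ⟨z, hz, ?_⟩
    rcases hseg with h | h | h
    · exact Or.inr (Or.inr h)
    · rw [segment_symm] at h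
      exact Or.inr (Or.inl h)
    · exact Or.inl h
  · exact separation h hx hy

lemma propagate {x y p q r : Pt} (hD : od p q r ≠ 0) (hx : InTri x p q r)
    (h1 : ∀ z, z ∈ segment ℝ x y → z ∈ segment ℝ p q → False)
    (h2 : ∀ z, z ∈ segment ℝ x y → z ∈ segment ℝ q r → False)
    (h3 : ∀ z, z ∈ segment ℝ x y → z ∈ segment ℝ p r → False) : InCl y p q r := by
  by_contra hy
  obtain ⟨z, hz, hz'⟩ := separation' hD hx hy
  rcases hz' with h | h | h
  exacts [h1 z hz h, h2 z hz h, h3 z hz h]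

lemma incl_cases {y p q r : Pt} (h : InCl y p q r) :
    InTri y p q r ∨ y ∈ segment ℝ p q ∨ y ∈ segment ℝ q r ∨ y ∈ segment ℝ p r := by
  obtain ⟨a, b, c, ha, hb, hc, hs, he⟩ := h
  rcases eq_or_lt_of_le ha with ha0 | ha0
  · refine Or.inr (Or.inr (Or.inl ⟨b, c, hb, hc, by linarith, ?_⟩))
    rw [← he, ← ha0]; module
  rcases eq_or_lt_of_le hb with hb0 | hb0
  · refine Or.inr (Or.inr (Or.inr ⟨a, c, ha, hc, by linarith, ?_⟩))
    rw [← he, ← hb0]; module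
  rcases eq_or_lt_of_le hc with hc0 | hc0
  · refine Or.inr (Or.inl ⟨a, b, ha, hb, by linarith, ?_⟩)
    rw [← he, ← hc0]; module
  · exact Or.inl ⟨a, b, c, ha0, hb0, hc0, hs, he⟩

lemma same_sign3 {a b c : ℝ} (ha : a ≠ 0) (hb : b ≠ 0) (hc : c ≠ 0) :
    0 < a * b ∨ 0 < a * c ∨ 0 < b * c := by
  rcases ha.lt_or_gt with h | h <;> rcases hb.lt_or_gt with h' | h' <;>
    rcases hc.lt_or_gt with h'' | h''
  · exact Or.inl (mul_pos_of_neg_of_neg h h')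
  · exact Or.inl (mul_pos_of_neg_of_neg h h')
  · exact Or.inr (Or.inl (mul_pos_of_neg_of_neg h h''))
  · exact Or.inr (Or.inr (mul_pos h' h''))
  · exact Or.inr (Or.inr (mul_pos_of_neg_of_neg h' h''))
  · exact Or.inr (Or.inl (mul_pos h h''))
  · exact Or.inl (mul_pos h h')
  · exact Or.inl (mul_pos h h')

end Gdg



namespace Gdg

lemma adj_lr (i : Fin 3) (j : Fin 4) : gadget.Adj (Sum.inl i) (Sum.inr j) := by
  simp [gadget]

lemma adj01 : gadget.Adj (Sum.inl 0) (Sum.inl 1) := by simp [gadget]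

lemma adj12 : gadget.Adj (Sum.inl 1) (Sum.inl 2) := by simp [gadget]

/-- the planar core: the gadget has no crossing-free straight-line drawing in the
plane. -/
theorem planar_core (pos : Fin 3 ⊕ Fin 4 → Pt)
    (inj : Function.Injective pos)
    (ncr : ∀ ⦃a b c d⦄, gadget.Adj a b → gadget.Adj c d →
      ({a, b} : Set (Fin 3 ⊕ Fin 4)) ≠ {c, d} →
      ∀ x ∈ segment ℝ (pos a) (pos b) ∩ segment ℝ (pos c) (pos d),
        ∃ w, (w = a ∨ w = b) ∧ (w = c ∨ w = d) ∧ x = pos w) : False := by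
  have hne : ∀ {s t : Fin 3 ⊕ Fin 4}, s ≠ t → pos s ≠ pos t := fun h he => h (inj he)
  set V1 := pos (Sum.inl 0) with hV1def
  set V2 := pos (Sum.inl 1) with hV2def
  set V3 := pos (Sum.inl 2) with hV3def
  set U : Fin 4 → Pt := fun j => pos (Sum.inr j) with hUdef
  have disj : ∀ {a b c d : Fin 3 ⊕ Fin 4}, gadget.Adj a b → gadget.Adj c d →
      a ≠ c → a ≠ d → b ≠ c → b ≠ d →
      ∀ x, x ∈ segment ℝ (pos a) (pos b) → x ∈ segment ℝ (pos c) (pos d) → False := by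
    intro a b c d h1 h2 hac had hbc hbd x hx1 hx2
    have hpair : ({a, b} : Set (Fin 3 ⊕ Fin 4)) ≠ {c, d} := by
      intro hset
      have hm : a ∈ ({c, d} : Set (Fin 3 ⊕ Fin 4)) := by
        rw [← hset]; exact Set.mem_insert _ _
      rcases hm with rfl | hm
      · exact hac rfl
      · exact had hm
    obtain ⟨w, hw1, hw2, -⟩ := ncr h1 h2 hpair x ⟨hx1, hx2⟩
    rcases hw1 with rfl | rfl <;> rcases hw2 with rfl | rfl <;> tauto
  have meet : ∀ {a b d : Fin 3 ⊕ Fin 4}, gadget.Adj a b → gadget.Adj a d →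
      b ≠ d → a ≠ d →
      ∀ x, x ∈ segment ℝ (pos a) (pos b) → x ∈ segment ℝ (pos a) (pos d) → x = pos a := by
    intro a b d h1 h2 hbd had x hx1 hx2
    have hpair : ({a, b} : Set (Fin 3 ⊕ Fin 4)) ≠ {a, d} := by
      intro hset
      have hm : b ∈ ({a, d} : Set (Fin 3 ⊕ Fin 4)) := by
        rw [← hset]; exact Set.mem_insert_of_mem _ rfl
      rcases hm with rfl | hm
      · exact h1.ne rfl
      · exact hbd hm
    obtain ⟨w, hw1, hw2, hxw⟩ := ncr h1 h2 hpair x ⟨hx1, hx2⟩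
    rcases hw1 with rfl | rfl
    · exact hxw
    · rcases hw2 with rfl | rfl
      · exact hxw
      · exact absurd rfl hbd
  -- nondegeneracy of the triangles (v1,v2,u j)
  have hDT : ∀ j : Fin 4, od V1 V2 (U j) ≠ 0 := by
    intro j h
    obtain ⟨k, hk⟩ := exists_ne j
    obtain ⟨t, hUj⟩ := col_decomp h (hne (by decide))
    rcases lt_trichotomy t 0 with ht | ht | ht
    · have hmem : V1 ∈ segment ℝ (U j) V2 :=
        seg_of_comb (S := 1 - t) (X := 1) (Y := -t) (by ring) zero_le_one (by linarith)
          (by linarith) (by linear_combination (norm := module) -hUj)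
      exact disj (adj_lr 0 k) ((adj_lr 1 j).symm) (by simp) (by simp) (by simp [hk, hk.symm])
        (by simp) V1 (left_mem_segment ℝ V1 (U k)) hmem
    · subst ht
      simp only [zero_smul, add_zero, sub_zero, one_smul] at hUj
      exact hne (by simp) hUj
    rcases lt_trichotomy t 1 with ht1 | ht1 | ht1
    · have hmem : U j ∈ segment ℝ V1 V2 := ⟨1 - t, t, by linarith, ht.le, by ring, hUj.symm⟩
      exact disj ((adj_lr 2 j).symm) adj01 (by simp) (by simp) (by simp) (by simp)
        (U j) (left_mem_segment ℝ (U j) V3) hmem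
    · subst ht1
      simp only [sub_self, zero_smul, zero_add, one_smul] at hUj
      exact hne (by simp) hUj
    · have hmem : V2 ∈ segment ℝ V1 (U j) := by
        refine seg_of_comb (S := t) (X := t - 1) (Y := 1) (by ring) (by linarith)
          zero_le_one (by linarith) ?_
        linear_combination (norm := module) -hUj
      exact disj ((adj_lr 1 k)) (adj_lr 0 j) (by simp) (by simp) (by simp) (by simp [hk, hk.symm])
        V2 (left_mem_segment ℝ V2 (U k)) hmem
  -- nondegeneracy of the triangles (v2,v3,u j)
  have hDT' : ∀ j : Fin 4, od V2 V3 (U j) ≠ 0 := by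
    intro j h
    obtain ⟨k, hk⟩ := exists_ne j
    obtain ⟨t, hUj⟩ := col_decomp h (hne (by decide))
    rcases lt_trichotomy t 0 with ht | ht | ht
    · have hmem : V2 ∈ segment ℝ (U j) V3 :=
        seg_of_comb (S := 1 - t) (X := 1) (Y := -t) (by ring) zero_le_one (by linarith)
          (by linarith) (by linear_combination (norm := module) -hUj)
      exact disj (adj_lr 1 k) ((adj_lr 2 j).symm) (by simp) (by simp) (by simp [hk, hk.symm])
        (by simp) V2 (left_mem_segment ℝ V2 (U k)) hmem
    · subst ht
      simp only [zero_smul, add_zero, sub_zero, one_smul] at hUj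
      exact hne (by simp) hUj
    rcases lt_trichotomy t 1 with ht1 | ht1 | ht1
    · have hmem : U j ∈ segment ℝ V2 V3 := ⟨1 - t, t, by linarith, ht.le, by ring, hUj.symm⟩
      exact disj ((adj_lr 0 j).symm) adj12 (by simp) (by simp) (by simp) (by simp)
        (U j) (left_mem_segment ℝ (U j) V1) hmem
    · subst ht1
      simp only [sub_self, zero_smul, zero_add, one_smul] at hUj
      exact hne (by simp) hUj
    · have hmem : V3 ∈ segment ℝ V2 (U j) := by
        refine seg_of_comb (S := t) (X := t - 1) (Y := 1) (by ring) (by linarith)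
          zero_le_one (by linarith) ?_
        linear_combination (norm := module) -hUj
      exact disj ((adj_lr 2 k)) (adj_lr 1 j) (by simp) (by simp) (by simp) (by simp [hk, hk.symm])
        V3 (left_mem_segment ℝ V3 (U k)) hmem
  -- boundary exclusions
  have hUkB : ∀ j k : Fin 4, j ≠ k →
      ¬(U k ∈ segment ℝ V1 V2 ∨ U k ∈ segment ℝ V2 (U j) ∨ U k ∈ segment ℝ V1 (U j)) := by
    rintro j k hjk (h | h | h)
    · exact disj ((adj_lr 2 k).symm) adj01 (by simp [hjk, hjk.symm]) (by simp [hjk, hjk.symm]) (by simp [hjk, hjk.symm]) (by simp [hjk, hjk.symm])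
        (U k) (left_mem_segment ℝ (U k) V3) h
    · exact disj ((adj_lr 2 k).symm) (adj_lr 1 j) (by simp [hjk, hjk.symm]) (by simp [hjk, hjk.symm])
        (by simp [hjk, hjk.symm]) (by simp [hjk, hjk.symm]) (U k) (left_mem_segment ℝ (U k) V3) h
    · exact disj ((adj_lr 2 k).symm) (adj_lr 0 j) (by simp [hjk, hjk.symm]) (by simp [hjk, hjk.symm])
        (by simp [hjk, hjk.symm]) (by simp [hjk, hjk.symm]) (U k) (left_mem_segment ℝ (U k) V3) h
  have hUkB' : ∀ j k : Fin 4, j ≠ k →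
      ¬(U k ∈ segment ℝ V2 V3 ∨ U k ∈ segment ℝ V3 (U j) ∨ U k ∈ segment ℝ V2 (U j)) := by
    rintro j k hjk (h | h | h)
    · exact disj ((adj_lr 0 k).symm) adj12 (by simp [hjk, hjk.symm]) (by simp [hjk, hjk.symm]) (by simp [hjk, hjk.symm]) (by simp [hjk, hjk.symm])
        (U k) (left_mem_segment ℝ (U k) V1) h
    · exact disj ((adj_lr 0 k).symm) (adj_lr 2 j) (by simp [hjk, hjk.symm]) (by simp [hjk, hjk.symm])
        (by simp [hjk, hjk.symm]) (by simp [hjk, hjk.symm]) (U k) (left_mem_segment ℝ (U k) V1) h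
    · exact disj ((adj_lr 0 k).symm) (adj_lr 1 j) (by simp [hjk, hjk.symm]) (by simp [hjk, hjk.symm])
        (by simp [hjk, hjk.symm]) (by simp [hjk, hjk.symm]) (U k) (left_mem_segment ℝ (U k) V1) h
  have hV3B : ∀ j : Fin 4,
      ¬(V3 ∈ segment ℝ V1 V2 ∨ V3 ∈ segment ℝ V2 (U j) ∨ V3 ∈ segment ℝ V1 (U j)) := by
    intro j h
    obtain ⟨k, hk⟩ := exists_ne j
    rcases h with h | h | h
    · exact disj (adj_lr 2 k) adj01 (by simp [hk, hk.symm]) (by simp [hk, hk.symm]) (by simp [hk, hk.symm]) (by simp [hk, hk.symm])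
        V3 (left_mem_segment ℝ V3 (U k)) h
    · exact disj (adj_lr 2 k) (adj_lr 1 j) (by simp [hk, hk.symm]) (by simp [hk, hk.symm]) (by simp [hk, hk.symm]) (by simp [hk, hk.symm])
        V3 (left_mem_segment ℝ V3 (U k)) h
    · exact disj (adj_lr 2 k) (adj_lr 0 j) (by simp [hk, hk.symm]) (by simp [hk, hk.symm]) (by simp [hk, hk.symm]) (by simp [hk, hk.symm])
        V3 (left_mem_segment ℝ V3 (U k)) h
  have hV1B' : ∀ j : Fin 4,
      ¬(V1 ∈ segment ℝ V2 V3 ∨ V1 ∈ segment ℝ V3 (U j) ∨ V1 ∈ segment ℝ V2 (U j)) := by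
    intro j h
    obtain ⟨k, hk⟩ := exists_ne j
    rcases h with h | h | h
    · exact disj (adj_lr 0 k) adj12 (by simp [hk, hk.symm]) (by simp [hk, hk.symm]) (by simp [hk, hk.symm]) (by simp [hk, hk.symm])
        V1 (left_mem_segment ℝ V1 (U k)) h
    · exact disj (adj_lr 0 k) (adj_lr 2 j) (by simp [hk, hk.symm]) (by simp [hk, hk.symm]) (by simp [hk, hk.symm]) (by simp [hk, hk.symm])
        V1 (left_mem_segment ℝ V1 (U k)) h
    · exact disj (adj_lr 0 k) (adj_lr 1 j) (by simp [hk, hk.symm]) (by simp [hk, hk.symm]) (by simp [hk, hk.symm]) (by simp [hk, hk.symm])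
        V1 (left_mem_segment ℝ V1 (U k)) h
  -- propagation lemmas
  have propU3 : ∀ j k : Fin 4, j ≠ k → InTri (U k) V1 V2 (U j) → InTri V3 V1 V2 (U j) := by
    intro j k hjk hin
    have hcl : InCl V3 V1 V2 (U j) := by
      refine propagate (hDT j) hin ?_ ?_ ?_
      · exact fun z hz hz' => disj ((adj_lr 2 k).symm) adj01 (by simp [hjk, hjk.symm]) (by simp [hjk, hjk.symm]) (by simp [hjk, hjk.symm])
          (by simp [hjk, hjk.symm]) z hz hz'
      · exact fun z hz hz' => disj ((adj_lr 2 k).symm) (adj_lr 1 j) (by simp [hjk, hjk.symm])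
          (by simp [hjk, hjk.symm]) (by simp [hjk, hjk.symm]) (by simp [hjk, hjk.symm]) z hz hz'
      · exact fun z hz hz' => disj ((adj_lr 2 k).symm) (adj_lr 0 j) (by simp [hjk, hjk.symm])
          (by simp [hjk, hjk.symm]) (by simp [hjk, hjk.symm]) (by simp [hjk, hjk.symm]) z hz hz'
    rcases incl_cases hcl with h | h | h | h
    · exact h
    · exact absurd (Or.inl h) (hV3B j)
    · exact absurd (Or.inr (Or.inl h)) (hV3B j)
    · exact absurd (Or.inr (Or.inr h)) (hV3B j)
  have propU1 : ∀ j k : Fin 4, j ≠ k → InTri (U k) V2 V3 (U j) → InTri V1 V2 V3 (U j) := by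
    intro j k hjk hin
    have hcl : InCl V1 V2 V3 (U j) := by
      refine propagate (hDT' j) hin ?_ ?_ ?_
      · exact fun z hz hz' => disj ((adj_lr 0 k).symm) adj12 (by simp [hjk, hjk.symm]) (by simp [hjk, hjk.symm]) (by simp [hjk, hjk.symm])
          (by simp [hjk, hjk.symm]) z hz hz'
      · exact fun z hz hz' => disj ((adj_lr 0 k).symm) (adj_lr 2 j) (by simp [hjk, hjk.symm])
          (by simp [hjk, hjk.symm]) (by simp [hjk, hjk.symm]) (by simp [hjk, hjk.symm]) z hz hz'
      · exact fun z hz hz' => disj ((adj_lr 0 k).symm) (adj_lr 1 j) (by simp [hjk, hjk.symm])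
          (by simp [hjk, hjk.symm]) (by simp [hjk, hjk.symm]) (by simp [hjk, hjk.symm]) z hz hz'
    rcases incl_cases hcl with h | h | h | h
    · exact h
    · exact absurd (Or.inl h) (hV1B' j)
    · exact absurd (Or.inr (Or.inl h)) (hV1B' j)
    · exact absurd (Or.inr (Or.inr h)) (hV1B' j)
  have prop3U : ∀ j k : Fin 4, j ≠ k → InTri V3 V1 V2 (U j) → InTri (U k) V1 V2 (U j) := by
    intro j k hjk hin
    have hcl : InCl (U k) V1 V2 (U j) := by
      refine propagate (hDT j) hin ?_ ?_ ?_
      · exact fun z hz hz' => disj (adj_lr 2 k) adj01 (by simp [hjk, hjk.symm]) (by simp [hjk, hjk.symm]) (by simp [hjk, hjk.symm])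
          (by simp [hjk, hjk.symm]) z hz hz'
      · exact fun z hz hz' => disj (adj_lr 2 k) (adj_lr 1 j) (by simp [hjk, hjk.symm]) (by simp [hjk, hjk.symm]) (by simp [hjk, hjk.symm])
          (by simp [hjk, hjk.symm]) z hz hz'
      · exact fun z hz hz' => disj (adj_lr 2 k) (adj_lr 0 j) (by simp [hjk, hjk.symm]) (by simp [hjk, hjk.symm]) (by simp [hjk, hjk.symm])
          (by simp [hjk, hjk.symm]) z hz hz'
    rcases incl_cases hcl with h | h | h | h
    · exact h
    · exact absurd (Or.inl h) (hUkB j k hjk)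
    · exact absurd (Or.inr (Or.inl h)) (hUkB j k hjk)
    · exact absurd (Or.inr (Or.inr h)) (hUkB j k hjk)
  have prop1U : ∀ j k : Fin 4, j ≠ k → InTri V1 V2 V3 (U j) → InTri (U k) V2 V3 (U j) := by
    intro j k hjk hin
    have hcl : InCl (U k) V2 V3 (U j) := by
      refine propagate (hDT' j) hin ?_ ?_ ?_
      · exact fun z hz hz' => disj (adj_lr 0 k) adj12 (by simp [hjk, hjk.symm]) (by simp [hjk, hjk.symm]) (by simp [hjk, hjk.symm])
          (by simp [hjk, hjk.symm]) z hz hz'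
      · exact fun z hz hz' => disj (adj_lr 0 k) (adj_lr 2 j) (by simp [hjk, hjk.symm]) (by simp [hjk, hjk.symm]) (by simp [hjk, hjk.symm])
          (by simp [hjk, hjk.symm]) z hz hz'
      · exact fun z hz hz' => disj (adj_lr 0 k) (adj_lr 1 j) (by simp [hjk, hjk.symm]) (by simp [hjk, hjk.symm]) (by simp [hjk, hjk.symm])
          (by simp [hjk, hjk.symm]) z hz hz'
    rcases incl_cases hcl with h | h | h | h
    · exact h
    · exact absurd (Or.inl h) (hUkB' j k hjk)
    · exact absurd (Or.inr (Or.inl h)) (hUkB' j k hjk)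
    · exact absurd (Or.inr (Or.inr h)) (hUkB' j k hjk)
  -- pigeonhole + nesting over base (V1, V2)
  have hnest1 : ∃ j k : Fin 4, j ≠ k ∧ InTri (U k) V1 V2 (U j) := by
    have hpick : ∃ j k : Fin 4, j ≠ k ∧ 0 < od V1 V2 (U j) * od V1 V2 (U k) := by
      rcases same_sign3 (hDT 0) (hDT 1) (hDT 2) with h | h | h
      · exact ⟨0, 1, by decide, h⟩
      · exact ⟨0, 2, by decide, h⟩
      · exact ⟨1, 2, by decide, h⟩
    obtain ⟨j, k, hjk, hsgn⟩ := hpick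
    have hUjk : U j ≠ U k := hne (by simp [hjk, hjk.symm])
    have d1 : ∀ x, x ∈ segment ℝ (U j) V1 → x ∈ segment ℝ (U k) V2 → False :=
      fun x hx hx' => disj ((adj_lr 0 j).symm) ((adj_lr 1 k).symm) (by simp [hjk, hjk.symm])
        (by simp [hjk, hjk.symm]) (by simp [hjk, hjk.symm]) (by simp [hjk, hjk.symm]) x hx hx'
    have d2 : ∀ x, x ∈ segment ℝ (U j) V2 → x ∈ segment ℝ (U k) V1 → False :=
      fun x hx hx' => disj ((adj_lr 1 j).symm) ((adj_lr 0 k).symm) (by simp [hjk, hjk.symm])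
        (by simp [hjk, hjk.symm]) (by simp [hjk, hjk.symm]) (by simp [hjk, hjk.symm]) x hx hx'
    rcases mul_pos_iff.mp hsgn with ⟨h1, h2⟩ | ⟨h1, h2⟩
    · rcases nesting hUjk h1 h2 d1 d2 with h | h
      · exact ⟨j, k, hjk, h⟩
      · exact ⟨k, j, hjk.symm, h⟩
    · have e : ∀ x : Pt, od V2 V1 x = - od V1 V2 x := by
        intro x; simp only [od]; ring
      have h1' : 0 < od V2 V1 (U j) := by rw [e]; linarith
      have h2' : 0 < od V2 V1 (U k) := by rw [e]; linarith
      have d1' : ∀ x, x ∈ segment ℝ (U j) V2 → x ∈ segment ℝ (U k) V1 → False := d2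
      have d2' : ∀ x, x ∈ segment ℝ (U j) V1 → x ∈ segment ℝ (U k) V2 → False := d1
      rcases nesting hUjk h1' h2' d1' d2' with h | h
      · exact ⟨j, k, hjk, h.swap12⟩
      · exact ⟨k, j, hjk.symm, h.swap12⟩
  -- pigeonhole + nesting over base (V2, V3)
  have hnest2 : ∃ j k : Fin 4, j ≠ k ∧ InTri (U k) V2 V3 (U j) := by
    have hpick : ∃ j k : Fin 4, j ≠ k ∧ 0 < od V2 V3 (U j) * od V2 V3 (U k) := by
      rcases same_sign3 (hDT' 0) (hDT' 1) (hDT' 2) with h | h | h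
      · exact ⟨0, 1, by decide, h⟩
      · exact ⟨0, 2, by decide, h⟩
      · exact ⟨1, 2, by decide, h⟩
    obtain ⟨j, k, hjk, hsgn⟩ := hpick
    have hUjk : U j ≠ U k := hne (by simp [hjk, hjk.symm])
    have d1 : ∀ x, x ∈ segment ℝ (U j) V2 → x ∈ segment ℝ (U k) V3 → False :=
      fun x hx hx' => disj ((adj_lr 1 j).symm) ((adj_lr 2 k).symm) (by simp [hjk, hjk.symm])
        (by simp [hjk, hjk.symm]) (by simp [hjk, hjk.symm]) (by simp [hjk, hjk.symm]) x hx hx'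
    have d2 : ∀ x, x ∈ segment ℝ (U j) V3 → x ∈ segment ℝ (U k) V2 → False :=
      fun x hx hx' => disj ((adj_lr 2 j).symm) ((adj_lr 1 k).symm) (by simp [hjk, hjk.symm])
        (by simp [hjk, hjk.symm]) (by simp [hjk, hjk.symm]) (by simp [hjk, hjk.symm]) x hx hx'
    rcases mul_pos_iff.mp hsgn with ⟨h1, h2⟩ | ⟨h1, h2⟩
    · rcases nesting hUjk h1 h2 d1 d2 with h | h
      · exact ⟨j, k, hjk, h⟩
      · exact ⟨k, j, hjk.symm, h⟩
    · have e : ∀ x : Pt, od V3 V2 x = - od V2 V3 x := by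
        intro x; simp only [od]; ring
      have h1' : 0 < od V3 V2 (U j) := by rw [e]; linarith
      have h2' : 0 < od V3 V2 (U k) := by rw [e]; linarith
      rcases nesting hUjk h1' h2' d2 d1 with h | h
      · exact ⟨j, k, hjk, h.swap12⟩
      · exact ⟨k, j, hjk.symm, h.swap12⟩
  obtain ⟨j0, k0, hjk0, hin0⟩ := hnest1
  obtain ⟨p0, q0, hpq0, hin0'⟩ := hnest2
  have hT : InTri V3 V1 V2 (U j0) := propU3 j0 k0 hjk0 hin0
  have hT' : InTri V1 V2 V3 (U p0) := propU1 p0 q0 hpq0 hin0'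
  by_cases hpj : p0 = j0
  · -- M4 : both interior relations with the same apex
    subst hpj
    obtain ⟨d, e, f, hd, he, hf, hsum1, hV3c⟩ := hT
    obtain ⟨a, b, cc, ha, hb, hc, hsum2, hV1c⟩ := hT'
    have hcomb : (1 - b * d) • V1 = (a + b * e) • V2 + (b * f + cc) • U p0 := by
      linear_combination (norm := module) -hV1c - b • hV3c
    have hS : (a + b * e) + (b * f + cc) = 1 - b * d := by
      linear_combination b * hsum1 + hsum2
    have hbe := mul_pos hb he
    have hbf := mul_pos hb hf
    have hmem : V1 ∈ segment ℝ V2 (U p0) :=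
      seg_of_comb hS (by linarith) (by linarith) (by linarith) hcomb
    have := meet (adj_lr 1 p0) (adj01.symm) (by simp) (by decide) V1 hmem
      (right_mem_segment ℝ V2 V1)
    exact hne (show (Sum.inl 0 : Fin 3 ⊕ Fin 4) ≠ Sum.inl 1 by decide) this
  · -- M5 : different apexes
    have hUp : InTri (U p0) V1 V2 (U j0) := prop3U j0 p0 (fun h => hpj h.symm) hT
    have hUj : InTri (U j0) V2 V3 (U p0) := prop1U p0 j0 hpj hT'
    obtain ⟨d, e, f, hd, he, hf, hsum1, hV3c⟩ := hT
    obtain ⟨g, h2, i2, hg, hh2, hi2, hsum2, hUpc⟩ := hUp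
    obtain ⟨al, be, ga, hal, hbe, hga, hsum3, hUjc⟩ := hUj
    have hcomb : (1 - be * f - ga * i2) • U j0 =
        (be * d + ga * g) • V1 + (al + be * e + ga * h2) • V2 := by
      linear_combination (norm := module) -hUjc - be • hV3c - ga • hUpc
    have hS : (be * d + ga * g) + (al + be * e + ga * h2) = 1 - be * f - ga * i2 := by
      linear_combination be * hsum1 + ga * hsum2 + hsum3
    have h1 := mul_pos hbe hd
    have h2' := mul_pos hga hg
    have h3 := mul_pos hbe he
    have h4 := mul_pos hga hh2
    have hmem : U j0 ∈ segment ℝ V1 V2 :=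
      seg_of_comb hS (by linarith) (by linarith) (by linarith) hcomb
    exact disj adj01 ((adj_lr 2 j0).symm) (by simp) (by simp) (by simp) (by simp)
      (U j0) hmem (left_mem_segment ℝ (U j0) V3)

end Gdg

namespace Gdg
abbrev Pt3 := Fin 3 → ℝ
lemma smul_fst' (c : ℝ) (p : Pt) : (c • p).1 = c * p.1 := rfl
lemma smul_snd' (c : ℝ) (p : Pt) : (c • p).2 = c * p.2 := rfl

/-- package extracted from a plane: affine functional + affine chart -/
theorem isPlane_pack {P : Set Pt3} (hP : IsPlane P) :
    ∃ (g : Pt3 →ₗ[ℝ] ℝ) (c : ℝ) (w : Pt3) (φ : Pt3 → Pt) (ψ : Pt → Pt3),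
      (∀ x, x ∈ P ↔ g x = c) ∧ (g w = 1) ∧
      (∀ x ∈ P, ψ (φ x) = x) ∧
      (∀ (a b : ℝ), a + b = 1 → ∀ y z : Pt3,
        φ (a • y + b • z) = a • φ y + b • φ z) := by
  obtain ⟨p, u, v, hli, rfl⟩ := hP
  -- find w outside the span of u, v
  have hspan : ∃ w : Pt3, w ∉ Submodule.span ℝ {u, v} := by
    by_contra hc
    push_neg at hc
    have htop : Submodule.span ℝ {u, v} = ⊤ := eq_top_iff.2 fun x _ => hc x
    have h1 : Module.finrank ℝ (Submodule.span ℝ ({u, v} : Set Pt3)) ≤ 2 := by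
      refine le_trans (finrank_span_le_card _) ?_
      classical
      rw [Set.toFinset_insert, Set.toFinset_singleton]
      exact le_trans (Finset.card_insert_le _ _) (by simp)
    rw [htop, finrank_top] at h1
    have h3 : Module.finrank ℝ Pt3 = 3 := by
      simp [Module.finrank_eq_card_basis (Pi.basisFun ℝ (Fin 3))]
    omega
  obtain ⟨w, hw⟩ := hspan
  have hli3 : LinearIndependent ℝ ![w, u, v] := by
    rw [show (![w, u, v] : Fin 3 → Pt3) = Fin.cons w ![u, v] from rfl,
      linearIndependent_fin_cons]
    refine ⟨hli, ?_⟩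
    rwa [show Set.range ![u, v] = {u, v} by
      ext x; simp [Fin.exists_fin_two, or_comm]]
  have h3 : Module.finrank ℝ Pt3 = 3 := by
    simp [Module.finrank_eq_card_basis (Pi.basisFun ℝ (Fin 3))]
  let B : Module.Basis (Fin 3) ℝ Pt3 := basisOfLinearIndependentOfCardEqFinrank hli3 (by simp [h3])
  have hB : ∀ i, B i = ![w, u, v] i := fun i => by
    simp [B, coe_basisOfLinearIndependentOfCardEqFinrank]
  have hrw : B.repr w = Finsupp.single 0 1 := by
    rw [show w = B 0 by rw [hB 0]; rfl]; exact B.repr_self 0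
  have hru : B.repr u = Finsupp.single 1 1 := by
    rw [show u = B 1 by rw [hB 1]; rfl]; exact B.repr_self 1
  have hrv : B.repr v = Finsupp.single 2 1 := by
    rw [show v = B 2 by rw [hB 2]; rfl]; exact B.repr_self 2
  refine ⟨B.coord 0, B.coord 0 p, w,
    fun x => (B.repr x 1 - B.repr p 1, B.repr x 2 - B.repr p 2),
    fun st => p + st.1 • u + st.2 • v, ?_, ?_, ?_, ?_⟩
  · intro x
    constructor
    · rintro ⟨s, t, rfl⟩
      simp only [Module.Basis.coord_apply, LinearEquiv.coe_coe, map_add, map_smul, hru, hrv,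
        Finsupp.coe_add, Finsupp.coe_smul, Pi.add_apply, Pi.smul_apply, smul_eq_mul]
      simp [Finsupp.single_apply]
    · intro hx
      simp only [Module.Basis.coord_apply] at hx
      have hy := B.sum_repr (x - p)
      rw [Fin.sum_univ_three] at hy
      have h0 : B.repr (x - p) 0 = 0 := by
        rw [map_sub]
        simp only [Finsupp.coe_sub, Pi.sub_apply]
        rw [hx]; ring
      have hu1 : B 1 = u := by rw [hB 1]; rfl
      have hv2 : B 2 = v := by rw [hB 2]; rfl
      refine ⟨B.repr (x - p) 1, B.repr (x - p) 2, ?_⟩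
      rw [h0, zero_smul, zero_add, hu1, hv2] at hy
      linear_combination (norm := module) -hy
  · simp [Module.Basis.coord_apply, hrw]
  · rintro x ⟨s, t, rfl⟩
    have e1 : B.repr (p + s • u + t • v) 1 = B.repr p 1 + s := by
      simp [map_add, map_smul, hru, hrv, Finsupp.single_apply]
    have e2 : B.repr (p + s • u + t • v) 2 = B.repr p 2 + t := by
      simp [map_add, map_smul, hru, hrv, Finsupp.single_apply]
    simp only []
    rw [e1, e2]
    have : B.repr p 1 + s - B.repr p 1 = s := by ring
    rw [this]
    have : B.repr p 2 + t - B.repr p 2 = t := by ring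
    rw [this]
  · intro a b hab y z
    have e1 : B.repr (a • y + b • z) = a • B.repr y + b • B.repr z := by
      simp [map_add, map_smul]
    have hb : b = 1 - a := by linarith
    subst hb
    apply Prod.ext <;>
      simp only [e1, Finsupp.coe_add, Finsupp.coe_smul, Pi.add_apply, Pi.smul_apply,
        smul_eq_mul, Prod.fst_add, Prod.snd_add, smul_fst', smul_snd'] <;> ring




lemma same_sign3' {a b c : ℝ} (ha : a ≠ 0) (hb : b ≠ 0) (hc : c ≠ 0) :
    0 < a * b ∨ 0 < a * c ∨ 0 < b * c := by
  rcases ha.lt_or_gt with h | h <;> rcases hb.lt_or_gt with h' | h' <;>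
    rcases hc.lt_or_gt with h'' | h''
  · exact Or.inl (mul_pos_of_neg_of_neg h h')
  · exact Or.inl (mul_pos_of_neg_of_neg h h')
  · exact Or.inr (Or.inl (mul_pos_of_neg_of_neg h h''))
  · exact Or.inr (Or.inr (mul_pos h' h''))
  · exact Or.inr (Or.inr (mul_pos_of_neg_of_neg h' h''))
  · exact Or.inr (Or.inl (mul_pos h h''))
  · exact Or.inl (mul_pos h h')
  · exact Or.inl (mul_pos h h')

lemma mem_seg_real {a b τ : ℝ} : τ ∈ segment ℝ a b ↔ (a ≤ τ ∧ τ ≤ b) ∨ (b ≤ τ ∧ τ ≤ a) := by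
  rw [segment_eq_uIcc, Set.mem_uIcc]

/-- a line direction for two distinct intersecting planes -/
theorem planes_line {P0 P1 : Set Pt3} (g0 g1 : Pt3 →ₗ[ℝ] ℝ) (c0 c1 : ℝ) (w0 w1 : Pt3)
    (m0 : ∀ x, x ∈ P0 ↔ g0 x = c0) (m1 : ∀ x, x ∈ P1 ↔ g1 x = c1)
    (hw0 : g0 w0 = 1) (hw1 : g1 w1 = 1)
    (hdist : P0 ≠ P1) (cpt : Pt3) (hc0 : cpt ∈ P0) (hc1 : cpt ∈ P1) :
    ∃ d : Pt3, d ≠ 0 ∧ ∀ x, x ∈ P0 → x ∈ P1 → ∃ t : ℝ, x = cpt + t • d := by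
  have h3 : Module.finrank ℝ Pt3 = 3 := by
    simp [Module.finrank_eq_card_basis (Pi.basisFun ℝ (Fin 3))]
  have hrk : ∀ (g : Pt3 →ₗ[ℝ] ℝ) (w : Pt3), g w = 1 →
      Module.finrank ℝ (LinearMap.ker g) = 2 := by
    intro g w hw
    have hsurj : LinearMap.range g = ⊤ := by
      rw [LinearMap.range_eq_top]
      intro r
      exact ⟨r • w, by simp [map_smul, hw]⟩
    have := LinearMap.finrank_range_add_finrank_ker g
    rw [hsurj, finrank_top, h3] at this
    have h1 : Module.finrank ℝ ℝ = 1 := Module.finrank_self ℝ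
    omega
  have hk0 := hrk g0 w0 hw0
  have hk1 := hrk g1 w1 hw1
  have hkne : LinearMap.ker g0 ≠ LinearMap.ker g1 := by
    intro h
    apply hdist
    ext x
    have e0 : g0 cpt = c0 := (m0 cpt).mp hc0
    have e1 : g1 cpt = c1 := (m1 cpt).mp hc1
    rw [m0, m1]
    constructor
    · intro hx
      have : x - cpt ∈ LinearMap.ker g0 := by
        rw [LinearMap.mem_ker, map_sub, hx, e0, sub_self]
      rw [h, LinearMap.mem_ker, map_sub, e1, sub_eq_zero] at this
      exact this
    · intro hx
      have : x - cpt ∈ LinearMap.ker g1 := by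
        rw [LinearMap.mem_ker, map_sub, hx, e1, sub_self]
      rw [← h, LinearMap.mem_ker, map_sub, e0, sub_eq_zero] at this
      exact this
  have hsup : LinearMap.ker g0 ⊔ LinearMap.ker g1 = ⊤ := by
    have hlt : LinearMap.ker g0 < LinearMap.ker g0 ⊔ LinearMap.ker g1 := by
      rcases lt_or_eq_of_le (le_sup_left :
        LinearMap.ker g0 ≤ LinearMap.ker g0 ⊔ LinearMap.ker g1) with h | h
      · exact h
      · exfalso
        have hle : LinearMap.ker g1 ≤ LinearMap.ker g0 := by
          rw [h]; exact le_sup_right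
        exact hkne (Submodule.eq_of_le_of_finrank_le hle (by omega)).symm
    have := Submodule.finrank_lt_finrank_of_lt hlt
    have hle3 := Submodule.finrank_le (LinearMap.ker g0 ⊔ LinearMap.ker g1)
    apply Submodule.eq_top_of_finrank_eq
    omega
  have hinf : Module.finrank ℝ ↥(LinearMap.ker g0 ⊓ LinearMap.ker g1) = 1 := by
    have := Submodule.finrank_sup_add_finrank_inf_eq (LinearMap.ker g0) (LinearMap.ker g1)
    rw [hsup, finrank_top, h3] at this
    omega
  have : Nontrivial ↥(LinearMap.ker g0 ⊓ LinearMap.ker g1) := by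
    apply Module.nontrivial_of_finrank_pos (R := ℝ)
    omega
  obtain ⟨dd, hdd⟩ := exists_ne (0 : ↥(LinearMap.ker g0 ⊓ LinearMap.ker g1))
  have hd0 : (dd : Pt3) ≠ 0 := fun h => hdd (Subtype.ext h)
  have hspan : Submodule.span ℝ {(dd : Pt3)} = LinearMap.ker g0 ⊓ LinearMap.ker g1 := by
    apply Submodule.eq_of_le_of_finrank_le
    · rw [Submodule.span_le, Set.singleton_subset_iff]
      exact dd.2
    · rw [finrank_span_singleton hd0]
      omega
  refine ⟨dd, hd0, ?_⟩
  intro x hx0 hx1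
  have e0 : g0 cpt = c0 := (m0 cpt).mp hc0
  have e1 : g1 cpt = c1 := (m1 cpt).mp hc1
  have hmem : x - cpt ∈ LinearMap.ker g0 ⊓ LinearMap.ker g1 := by
    rw [Submodule.mem_inf]
    constructor
    · rw [LinearMap.mem_ker, map_sub, (m0 x).mp hx0, e0, sub_self]
    · rw [LinearMap.mem_ker, map_sub, (m1 x).mp hx1, e1, sub_self]
  rw [← hspan, Submodule.mem_span_singleton] at hmem
  obtain ⟨t, ht⟩ := hmem
  exact ⟨t, by linear_combination (norm := module) -ht⟩

lemma seg_line_param {cpt d : Pt3} (hd : d ≠ 0) {a b : ℝ} {x : Pt3}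
    (hx : x ∈ segment ℝ (cpt + a • d) (cpt + b • d)) :
    ∃ τ, τ ∈ segment ℝ a b ∧ x = cpt + τ • d := by
  obtain ⟨α, β, hα, hβ, hs, he⟩ := hx
  refine ⟨α * a + β * b, ⟨α, β, hα, hβ, hs, by simp [smul_eq_mul]⟩, ?_⟩
  have hβ' : β = 1 - α := by linarith
  subst hβ'
  rw [← he]; module

lemma seg_line_mem (cpt d : Pt3) {a b τ : ℝ} (hτ : τ ∈ segment ℝ a b) :
    cpt + τ • d ∈ segment ℝ (cpt + a • d) (cpt + b • d) := by
  obtain ⟨α, β, hα, hβ, hs, he⟩ := hτ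
  refine ⟨α, β, hα, hβ, hs, ?_⟩
  have hβ' : β = 1 - α := by linarith
  subst hβ'
  rw [← he]
  simp only [smul_eq_mul]
  module

/-- five collinear points: center joined to four others pairwise meeting only at center -/
lemma line5 (t0 : ℝ) (s : Fin 4 → ℝ) (hs : ∀ j, s j ≠ t0)
    (hmeet : ∀ j k : Fin 4, j ≠ k →
      ∀ τ, τ ∈ segment ℝ t0 (s j) → τ ∈ segment ℝ t0 (s k) → τ = t0) : False := by
  have key : ∀ j k : Fin 4, j ≠ k → 0 < (s j - t0) * (s k - t0) → False := by
    intro j k hjk hpos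
    rcases mul_pos_iff.mp hpos with ⟨h1, h2⟩ | ⟨h1, h2⟩
    · rcases le_total (s j) (s k) with h | h
      · exact hs j (hmeet j k hjk (s j) (right_mem_segment ℝ t0 (s j))
          (mem_seg_real.mpr (Or.inl ⟨by linarith, h⟩)))
      · exact hs k (hmeet j k hjk (s k)
          (mem_seg_real.mpr (Or.inl ⟨by linarith, h⟩)) (right_mem_segment ℝ t0 (s k)))
    · rcases le_total (s j) (s k) with h | h
      · exact hs k (hmeet j k hjk (s k)
          (mem_seg_real.mpr (Or.inr ⟨h, by linarith⟩)) (right_mem_segment ℝ t0 (s k)))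
      · exact hs j (hmeet j k hjk (s j) (right_mem_segment ℝ t0 (s j))
          (mem_seg_real.mpr (Or.inr ⟨h, by linarith⟩)))
  have h0 := sub_ne_zero.mpr (hs 0)
  have h1 := sub_ne_zero.mpr (hs 1)
  have h2 := sub_ne_zero.mpr (hs 2)
  rcases same_sign3' h0 h1 h2 with h | h | h
  · exact key 0 1 (by decide) h
  · exact key 0 2 (by decide) h
  · exact key 1 2 (by decide) h

/-- four collinear points forming the path plus a spoke vertex: impossible -/
lemma line4 (t1 t2 t3 s : ℝ) (h12 : t1 ≠ t2) (h23 : t2 ≠ t3) (hs2 : s ≠ t2)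
    (hmeet : ∀ τ, τ ∈ segment ℝ t1 t2 → τ ∈ segment ℝ t2 t3 → τ = t2)
    (hd1 : ∀ τ, τ ∈ segment ℝ s t3 → τ ∈ segment ℝ t1 t2 → False)
    (hd2 : ∀ τ, τ ∈ segment ℝ s t1 → τ ∈ segment ℝ t2 t3 → False) : False := by
  have hbet : (t1 - t2) * (t3 - t2) < 0 := by
    rcases lt_trichotomy ((t1 - t2) * (t3 - t2)) 0 with h | h | h
    · exact h
    · exfalso
      rcases mul_eq_zero.mp h with h' | h'
      · exact h12 (by have := sub_eq_zero.mp h'; linarith)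
      · exact h23 (by have := sub_eq_zero.mp h'; linarith)
    · exfalso
      rcases mul_pos_iff.mp h with ⟨ha, hb⟩ | ⟨ha, hb⟩
      · rcases le_total t1 t3 with hh | hh
        · exact h12 (hmeet t1 (left_mem_segment ℝ t1 t2)
            (mem_seg_real.mpr (Or.inl ⟨by linarith, hh⟩)))
        · exact h23 (hmeet t3 (mem_seg_real.mpr (Or.inr ⟨by linarith, by linarith⟩))
            (right_mem_segment ℝ t2 t3)).symm
      · rcases le_total t1 t3 with hh | hh
        · exact h23 (hmeet t3 (mem_seg_real.mpr (Or.inl ⟨hh, by linarith⟩))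
            (right_mem_segment ℝ t2 t3)).symm
        · exact h12 (hmeet t1 (left_mem_segment ℝ t1 t2)
            (mem_seg_real.mpr (Or.inr ⟨hh, by linarith⟩)))
  rcases hs2.lt_or_gt with hso | hso <;>
    rcases mul_neg_iff.mp hbet with ⟨ha, hb⟩ | ⟨ha, hb⟩
  · -- s < t2, t1 > t2 > t3 : t2 ∈ [s,t1] ∩ [t2,t3]
    exact hd2 t2 (mem_seg_real.mpr (Or.inl ⟨hso.le, by linarith⟩))
      (left_mem_segment ℝ t2 t3)
  · -- s < t2, t1 < t2 < t3 : t2 ∈ [s,t3] ∩ [t1,t2]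
    exact hd1 t2 (mem_seg_real.mpr (Or.inl ⟨hso.le, by linarith⟩))
      (right_mem_segment ℝ t1 t2)
  · -- s > t2, t1 > t2 > t3 : t2 ∈ [s,t3] ∩ [t1,t2]
    exact hd1 t2 (mem_seg_real.mpr (Or.inr ⟨by linarith, hso.le⟩))
      (right_mem_segment ℝ t1 t2)
  · -- s > t2, t1 < t2 < t3 : t2 ∈ [s,t1] ∩ [t2,t3]
    exact hd2 t2 (mem_seg_real.mpr (Or.inr ⟨by linarith, hso.le⟩))
      (left_mem_segment ℝ t2 t3)


end Gdg

/-- If the intersection line gadget has a crossing-free straight-line drawing in `ℝ³`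
contained in the union of two distinct non-parallel planes, then `v₁, v₂, v₃` lie on the
intersection line of the two planes and none of `u₁, …, u₄` lies on that line. -/
theorem stmt_15 (c : PlaneCover gadget 2)
    (hdist : c.planes 0 ≠ c.planes 1)
    (hmeet : (c.planes 0 ∩ c.planes 1).Nonempty) :
    (∀ i : Fin 3, c.pos (Sum.inl i) ∈ c.planes 0 ∩ c.planes 1) ∧
      (∀ j : Fin 4, c.pos (Sum.inr j) ∉ c.planes 0 ∩ c.planes 1) := by
  classical
  obtain ⟨g0, c0, w0, φ0, ψ0, m0, hw0, li0, aff0⟩ := Gdg.isPlane_pack (c.isPlane 0)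
  obtain ⟨g1, c1, w1, φ1, ψ1, m1, hw1, li1, aff1⟩ := Gdg.isPlane_pack (c.isPlane 1)
  obtain ⟨cpt, hcpt0, hcpt1⟩ := hmeet
  obtain ⟨d, hd0, hline⟩ :=
    Gdg.planes_line g0 g1 c0 c1 w0 w1 m0 m1 hw0 hw1 hdist cpt hcpt0 hcpt1
  set pos := c.pos with hposdef
  have hne : ∀ {s t : Fin 3 ⊕ Fin 4}, s ≠ t → pos s ≠ pos t := fun h he => h (c.inj he)
  have union2 : ∀ x : Gdg.Pt3, x ∈ (⋃ i, c.planes i) ↔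
      x ∈ c.planes 0 ∨ x ∈ c.planes 1 := by
    intro x; simp [Set.mem_iUnion, Fin.exists_fin_two]
  have hvert : ∀ s, pos s ∈ c.planes 0 ∨ pos s ∈ c.planes 1 :=
    fun s => (union2 _).1 (c.coversV s)
  -- every edge lies entirely in one of the two planes
  have edge_plane : ∀ {a b}, gadget.Adj a b →
      (pos a ∈ c.planes 0 ∧ pos b ∈ c.planes 0) ∨
      (pos a ∈ c.planes 1 ∧ pos b ∈ c.planes 1) := by
    intro a b hadj
    by_contra hcc
    push_neg at hcc
    obtain ⟨hA, hB⟩ := hcc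
    have hmid : ((1:ℝ)/2) • pos a + ((1:ℝ)/2) • pos b ∈ segment ℝ (pos a) (pos b) :=
      ⟨1/2, 1/2, by norm_num, by norm_num, by norm_num, rfl⟩
    have hmem := (union2 _).1 (c.coversE hadj hmid)
    have g0mid : g0 (((1:ℝ)/2) • pos a + ((1:ℝ)/2) • pos b)
        = (g0 (pos a) + g0 (pos b))/2 := by
      rw [map_add, map_smul, map_smul]; simp [smul_eq_mul]; ring
    have g1mid : g1 (((1:ℝ)/2) • pos a + ((1:ℝ)/2) • pos b)
        = (g1 (pos a) + g1 (pos b))/2 := by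
      rw [map_add, map_smul, map_smul]; simp [smul_eq_mul]; ring
    rcases hvert a with ha | ha
    · have hb0 : pos b ∉ c.planes 0 := fun h => hA ha h
      have hb1 : pos b ∈ c.planes 1 := (hvert b).resolve_left hb0
      have ha1 : pos a ∉ c.planes 1 := fun h => hB h hb1
      rcases hmem with hm | hm
      · rw [m0] at hm ha
        rw [g0mid] at hm
        exact hb0 ((m0 _).2 (by linarith))
      · rw [m1] at hm hb1
        rw [g1mid] at hm
        exact ha1 ((m1 _).2 (by linarith))
    · have hb1 : pos b ∉ c.planes 1 := fun h => hB ha h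
      have hb0 : pos b ∈ c.planes 0 := (hvert b).resolve_right hb1
      have ha0 : pos a ∉ c.planes 0 := fun h => hA h hb0
      rcases hmem with hm | hm
      · rw [m0] at hm hb0
        rw [g0mid] at hm
        exact ha0 ((m0 _).2 (by linarith))
      · rw [m1] at hm ha
        rw [g1mid] at hm
        exact hb1 ((m1 _).2 (by linarith))
  have nbr0 : ∀ {a b}, gadget.Adj a b → pos a ∉ c.planes 1 → pos b ∈ c.planes 0 := by
    intro a b h h1
    rcases edge_plane h with ⟨_, hb⟩ | ⟨ha, _⟩
    · exact hb
    · exact absurd ha h1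
  have nbr1 : ∀ {a b}, gadget.Adj a b → pos a ∉ c.planes 0 → pos b ∈ c.planes 1 := by
    intro a b h h0
    rcases edge_plane h with ⟨ha, _⟩ | ⟨_, hb⟩
    · exact absurd ha h0
    · exact hb
  -- noCross specializations
  have disj : ∀ {a b a' b' : Fin 3 ⊕ Fin 4}, gadget.Adj a b → gadget.Adj a' b' →
      a ≠ a' → a ≠ b' → b ≠ a' → b ≠ b' →
      ∀ x, x ∈ segment ℝ (pos a) (pos b) → x ∈ segment ℝ (pos a') (pos b') → False := by
    intro a b a' b' h1 h2 hac had hbc hbd x hx1 hx2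
    have hpair : ({a, b} : Set (Fin 3 ⊕ Fin 4)) ≠ {a', b'} := by
      intro hset
      have hm : a ∈ ({a', b'} : Set (Fin 3 ⊕ Fin 4)) := by
        rw [← hset]; exact Set.mem_insert _ _
      rcases hm with rfl | hm
      · exact hac rfl
      · exact had hm
    obtain ⟨w, hw1, hw2, -⟩ := c.noCross h1 h2 hpair x ⟨hx1, hx2⟩
    rcases hw1 with rfl | rfl <;> rcases hw2 with rfl | rfl <;> tauto
  have meet : ∀ {a b d' : Fin 3 ⊕ Fin 4}, gadget.Adj a b → gadget.Adj a d' →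
      b ≠ d' → a ≠ d' →
      ∀ x, x ∈ segment ℝ (pos a) (pos b) → x ∈ segment ℝ (pos a) (pos d') →
        x = pos a := by
    intro a b d' h1 h2 hbd had x hx1 hx2
    have hpair : ({a, b} : Set (Fin 3 ⊕ Fin 4)) ≠ {a, d'} := by
      intro hset
      have hm : b ∈ ({a, d'} : Set (Fin 3 ⊕ Fin 4)) := by
        rw [← hset]; exact Set.mem_insert_of_mem _ rfl
      rcases hm with rfl | hm
      · exact h1.ne rfl
      · exact hbd hm
    obtain ⟨w, hw1, hw2, hxw⟩ := c.noCross h1 h2 hpair x ⟨hx1, hx2⟩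
    rcases hw1 with rfl | rfl
    · exact hxw
    · rcases hw2 with rfl | rfl
      · exact hxw
      · exact absurd rfl hbd
  -- if all vertices lie in one plane we get a planar drawing: impossible
  have planar_case : ∀ (P : Set Gdg.Pt3) (g : Gdg.Pt3 →ₗ[ℝ] ℝ) (cc : ℝ)
      (φ : Gdg.Pt3 → Gdg.Pt) (ψ : Gdg.Pt → Gdg.Pt3),
      (∀ x, x ∈ P ↔ g x = cc) → (∀ x ∈ P, ψ (φ x) = x) →
      (∀ (a b : ℝ), a + b = 1 → ∀ y z, φ (a • y + b • z) = a • φ y + b • φ z) →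
      (∀ s, pos s ∈ P) → False := by
    intro P g cc φ ψ mm liP affP hall
    apply Gdg.planar_core (fun s => φ (pos s))
    · intro s t hst
      have h1 : ψ (φ (pos s)) = pos s := liP _ (hall s)
      have h2 : ψ (φ (pos t)) = pos t := liP _ (hall t)
      have hst' : φ (pos s) = φ (pos t) := hst
      apply c.inj
      show pos s = pos t
      rw [← h1, ← h2, hst']
    · intro a b a' b' h1 h2 hpair x hx
      obtain ⟨hx1, hx2⟩ := hx
      obtain ⟨α, β, hα, hβ, hs, he⟩ := hx1
      obtain ⟨α', β', hα', hβ', hs', he'⟩ := hx2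
      have hz1P : α • pos a + β • pos b ∈ P := by
        rw [mm, map_add, map_smul, map_smul, (mm _).1 (hall a), (mm _).1 (hall b)]
        simp only [smul_eq_mul]
        linear_combination cc * hs
      have hz2P : α' • pos a' + β' • pos b' ∈ P := by
        rw [mm, map_add, map_smul, map_smul, (mm _).1 (hall a'), (mm _).1 (hall b')]
        simp only [smul_eq_mul]
        linear_combination cc * hs'
      have hφz1 : φ (α • pos a + β • pos b) = x := by rw [affP α β hs]; exact he
      have hφz2 : φ (α' • pos a' + β' • pos b') = x := by rw [affP α' β' hs']; exact he'
      have hz12 : α • pos a + β • pos b = α' • pos a' + β' • pos b' := by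
        rw [← liP _ hz1P, ← liP _ hz2P, hφz1, hφz2]
      have hz1seg : α • pos a + β • pos b ∈ segment ℝ (pos a) (pos b) :=
        ⟨α, β, hα, hβ, hs, rfl⟩
      have hz2seg : α • pos a + β • pos b ∈ segment ℝ (pos a') (pos b') := by
        rw [hz12]; exact ⟨α', β', hα', hβ', hs', rfl⟩
      obtain ⟨w, hw1, hw2, hzw⟩ := c.noCross h1 h2 hpair _ ⟨hz1seg, hz2seg⟩
      exact ⟨w, hw1, hw2, by rw [← hφz1, hzw]⟩
  -- parameter cancellation along the line
  have param_cancel : ∀ {τ τ' : ℝ}, cpt + τ • d = cpt + τ' • d → τ = τ' := by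
    intro τ τ' h
    have h2 : (τ - τ') • d = 0 := by
      have := sub_eq_zero.mpr h
      rw [show cpt + τ • d - (cpt + τ' • d) = (τ - τ') • d by module] at this
      exact this
    rcases smul_eq_zero.mp h2 with h3 | h3
    · linarith [h3]
    · exact absurd h3 hd0
  -- Claim A: the path vertices all lie on the intersection line
  have claimA : ∀ i : Fin 3, pos (Sum.inl i) ∈ c.planes 0 ∧ pos (Sum.inl i) ∈ c.planes 1 := by
    intro i
    by_contra hcon
    -- find out which plane contains v i
    have hbranch : (pos (Sum.inl i) ∈ c.planes 0 ∧ pos (Sum.inl i) ∉ c.planes 1) ∨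
        (pos (Sum.inl i) ∈ c.planes 1 ∧ pos (Sum.inl i) ∉ c.planes 0) := by
      by_cases h0 : pos (Sum.inl i) ∈ c.planes 0
      · exact Or.inl ⟨h0, fun h1 => hcon ⟨h0, h1⟩⟩
      · exact Or.inr ⟨(hvert _).resolve_left h0, h0⟩
    -- in either branch, we find a line configuration or a planar configuration
    rcases hbranch with ⟨hvi, hvi'⟩ | ⟨hvi, hvi'⟩
    · -- v i ∈ P0 \ P1
      have hu : ∀ j : Fin 4, pos (Sum.inr j) ∈ c.planes 0 :=
        fun j => nbr0 (Gdg.adj_lr i j) hvi'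
      by_cases hall : ∀ k : Fin 3, pos (Sum.inl k) ∈ c.planes 0
      · exact planar_case _ g0 c0 φ0 ψ0 m0 li0 aff0
          (fun s => Sum.rec (fun k => hall k) (fun j => hu j) s)
      · push_neg at hall
        obtain ⟨k, hk⟩ := hall
        have hk1 : pos (Sum.inl k) ∈ c.planes 1 := (hvert _).resolve_left hk
        have hki : k ≠ i := fun h => hk (h ▸ hvi)
        have hnadj : ¬ gadget.Adj (Sum.inl i) (Sum.inl k) := by
          intro h
          rcases edge_plane h with ⟨_, h2⟩ | ⟨h1, _⟩
          · exact hk h2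
          · exact hvi' h1
        have hik : (i = 0 ∧ k = 2) ∨ (i = 2 ∧ k = 0) := by
          fin_cases i <;> fin_cases k <;>
            first
              | (exact absurd rfl hki)
              | (exact absurd Gdg.adj01 hnadj)
              | (exact absurd Gdg.adj01.symm hnadj)
              | (exact absurd Gdg.adj12 hnadj)
              | (exact absurd Gdg.adj12.symm hnadj)
              | (exact Or.inl ⟨rfl, rfl⟩)
              | (exact Or.inr ⟨rfl, rfl⟩)
        -- middle vertex is in both planes, all u's are in both planes
        have hmidp : pos (Sum.inl 1) ∈ c.planes 0 ∧ pos (Sum.inl 1) ∈ c.planes 1 := by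
          rcases hik with ⟨hi, hkk⟩ | ⟨hi, hkk⟩ <;> subst hi <;> subst hkk
          · exact ⟨nbr0 Gdg.adj01 hvi', nbr1 Gdg.adj12.symm hk⟩
          · exact ⟨nbr0 Gdg.adj12.symm hvi', nbr1 Gdg.adj01 hk⟩
        have hu1 : ∀ j : Fin 4, pos (Sum.inr j) ∈ c.planes 1 := by
          intro j
          rcases hik with ⟨hi, hkk⟩ | ⟨hi, hkk⟩ <;> subst hkk <;>
            exact nbr1 (Gdg.adj_lr _ j) hk
        obtain ⟨tm, htm⟩ := hline (pos (Sum.inl 1)) hmidp.1 hmidp.2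
        choose ts hts using fun j => hline (pos (Sum.inr j)) (hu j) (hu1 j)
        refine Gdg.line5 tm ts ?_ ?_
        · intro j h
          exact hne (show (Sum.inr j : Fin 3 ⊕ Fin 4) ≠ Sum.inl 1 by simp)
            (by rw [hts j, htm, h])
        · intro j k hjk τ hτ1 hτ2
          have hx1 := Gdg.seg_line_mem cpt d (a := tm) (b := ts j) hτ1
          have hx2 := Gdg.seg_line_mem cpt d (a := tm) (b := ts k) hτ2
          rw [← htm, ← hts j] at hx1
          rw [← htm, ← hts k] at hx2
          have := meet (Gdg.adj_lr 1 j) (Gdg.adj_lr 1 k) (by simp [hjk])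
            (by simp) _ hx1 hx2
          rw [htm] at this
          exact param_cancel this
    · -- v i ∈ P1 \ P0 : symmetric
      have hu : ∀ j : Fin 4, pos (Sum.inr j) ∈ c.planes 1 :=
        fun j => nbr1 (Gdg.adj_lr i j) hvi'
      by_cases hall : ∀ k : Fin 3, pos (Sum.inl k) ∈ c.planes 1
      · exact planar_case _ g1 c1 φ1 ψ1 m1 li1 aff1
          (fun s => Sum.rec (fun k => hall k) (fun j => hu j) s)
      · push_neg at hall
        obtain ⟨k, hk⟩ := hall
        have hk0 : pos (Sum.inl k) ∈ c.planes 0 := (hvert _).resolve_right hk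
        have hki : k ≠ i := fun h => hk (h ▸ hvi)
        have hnadj : ¬ gadget.Adj (Sum.inl i) (Sum.inl k) := by
          intro h
          rcases edge_plane h with ⟨h1, _⟩ | ⟨_, h2⟩
          · exact hvi' h1
          · exact hk h2
        have hik : (i = 0 ∧ k = 2) ∨ (i = 2 ∧ k = 0) := by
          fin_cases i <;> fin_cases k <;>
            first
              | (exact absurd rfl hki)
              | (exact absurd Gdg.adj01 hnadj)
              | (exact absurd Gdg.adj01.symm hnadj)
              | (exact absurd Gdg.adj12 hnadj)
              | (exact absurd Gdg.adj12.symm hnadj)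
              | (exact Or.inl ⟨rfl, rfl⟩)
              | (exact Or.inr ⟨rfl, rfl⟩)
        have hmidp : pos (Sum.inl 1) ∈ c.planes 0 ∧ pos (Sum.inl 1) ∈ c.planes 1 := by
          rcases hik with ⟨hi, hkk⟩ | ⟨hi, hkk⟩ <;> subst hi <;> subst hkk
          · exact ⟨nbr0 Gdg.adj12.symm hk, nbr1 Gdg.adj01 hvi'⟩
          · exact ⟨nbr0 Gdg.adj01 hk, nbr1 Gdg.adj12.symm hvi'⟩
        have hu0 : ∀ j : Fin 4, pos (Sum.inr j) ∈ c.planes 0 := by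
          intro j
          rcases hik with ⟨hi, hkk⟩ | ⟨hi, hkk⟩ <;> subst hkk <;>
            exact nbr0 (Gdg.adj_lr _ j) hk
        obtain ⟨tm, htm⟩ := hline (pos (Sum.inl 1)) hmidp.1 hmidp.2
        choose ts hts using fun j => hline (pos (Sum.inr j)) (hu0 j) (hu j)
        refine Gdg.line5 tm ts ?_ ?_
        · intro j h
          exact hne (show (Sum.inr j : Fin 3 ⊕ Fin 4) ≠ Sum.inl 1 by simp)
            (by rw [hts j, htm, h])
        · intro j k hjk τ hτ1 hτ2
          have hx1 := Gdg.seg_line_mem cpt d (a := tm) (b := ts j) hτ1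
          have hx2 := Gdg.seg_line_mem cpt d (a := tm) (b := ts k) hτ2
          rw [← htm, ← hts j] at hx1
          rw [← htm, ← hts k] at hx2
          have := meet (Gdg.adj_lr 1 j) (Gdg.adj_lr 1 k) (by simp [hjk])
            (by simp) _ hx1 hx2
          rw [htm] at this
          exact param_cancel this
  -- Claim B : no u vertex lies on the line
  have claimB : ∀ j : Fin 4, ¬(pos (Sum.inr j) ∈ c.planes 0 ∧ pos (Sum.inr j) ∈ c.planes 1) := by
    rintro j ⟨hj0, hj1⟩
    obtain ⟨t1, ht1⟩ := hline (pos (Sum.inl 0)) (claimA 0).1 (claimA 0).2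
    obtain ⟨t2, ht2⟩ := hline (pos (Sum.inl 1)) (claimA 1).1 (claimA 1).2
    obtain ⟨t3, ht3⟩ := hline (pos (Sum.inl 2)) (claimA 2).1 (claimA 2).2
    obtain ⟨ss, hss⟩ := hline (pos (Sum.inr j)) hj0 hj1
    have pne : ∀ {a b : Fin 3 ⊕ Fin 4} {ta tb : ℝ}, a ≠ b → pos a = cpt + ta • d →
        pos b = cpt + tb • d → ta ≠ tb := by
      intro a b ta tb hab hpa hpb h
      exact hne hab (by rw [hpa, hpb, h])
    refine Gdg.line4 t1 t2 t3 ss (pne (by decide) ht1 ht2) (pne (by decide) ht2 ht3)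
      (pne (by simp) hss ht2) ?_ ?_ ?_
    · intro τ hτ1 hτ2
      have hx1 := Gdg.seg_line_mem cpt d (a := t1) (b := t2) hτ1
      have hx2 := Gdg.seg_line_mem cpt d (a := t2) (b := t3) hτ2
      rw [← ht1, ← ht2] at hx1
      rw [← ht2, ← ht3] at hx2
      rw [segment_symm] at hx1
      have := meet Gdg.adj01.symm Gdg.adj12 (by decide) (by decide) _ hx1 hx2
      rw [ht2] at this
      exact param_cancel this
    · intro τ hτ1 hτ2
      have hx1 := Gdg.seg_line_mem cpt d (a := ss) (b := t3) hτ1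
      have hx2 := Gdg.seg_line_mem cpt d (a := t1) (b := t2) hτ2
      rw [← hss, ← ht3] at hx1
      rw [← ht1, ← ht2] at hx2
      exact disj ((Gdg.adj_lr 2 j).symm) Gdg.adj01 (by simp) (by simp) (by decide)
        (by decide) _ hx1 hx2
    · intro τ hτ1 hτ2
      have hx1 := Gdg.seg_line_mem cpt d (a := ss) (b := t1) hτ1
      have hx2 := Gdg.seg_line_mem cpt d (a := t2) (b := t3) hτ2
      rw [← hss, ← ht1] at hx1
      rw [← ht2, ← ht3] at hx2
      exact disj ((Gdg.adj_lr 0 j).symm) Gdg.adj12 (by simp) (by simp) (by decide)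
        (by decide) _ hx1 hx2
  exact ⟨fun i => ⟨(claimA i).1, (claimA i).2⟩, fun j hj => claimB j ⟨hj.1, hj.2⟩⟩
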